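/- Let φ solve -c²φ'' + sin(φ) = 0 on (0,∞) with φ' nowhere zero, and let ψ ∈ C²(0,∞) with ψ, ψ' decaying at infinity and ψ'(0+) = 0. Then ∫₀^∞ (-c²ψ'' + cos(φ)ψ)·ψ dx = ∫₀^∞ c²(φ')²·((ψ/φ')')² dx - c²·ψ(0)²·φ''(0)/φ'(0). -/

import Mathlib

open Real Set Filter MeasureTheory

open Topology

theorem stmt_10 (c : ℝ) (hc : 0 < c) (φ ψ : ℝ → ℝ)
    (hφ : ContDiff ℝ 3 φ) (hψ : ContDiff ℝ 2 ψ)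
    (heq : ∀ x ≥ 0, -c ^ 2 * deriv (deriv φ) x + sin (φ x) = 0)
    (hφ' : ∀ x ≥ 0, deriv φ x ≠ 0)
    (hψ0 : deriv ψ 0 = 0)
    (hdecay1 : Tendsto ψ atTop (nhds 0))
    (hdecay2 : Tendsto (deriv ψ) atTop (nhds 0))
    (hint1 : IntegrableOn
      (fun x => (-c ^ 2 * deriv (deriv ψ) x + cos (φ x) * ψ x) * ψ x) (Ioi 0))
    (hint2 : IntegrableOn
      (fun x => c ^ 2 * (deriv φ x) ^ 2 *
        (deriv (fun y => ψ y / deriv φ y) x) ^ 2) (Ioi 0)) :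
    ∫ x in Ioi 0, (-c ^ 2 * deriv (deriv ψ) x + cos (φ x) * ψ x) * ψ x
      = (∫ x in Ioi 0, c ^ 2 * (deriv φ x) ^ 2 *
          (deriv (fun y => ψ y / deriv φ y) x) ^ 2)
        - c ^ 2 * (ψ 0) ^ 2 * deriv (deriv φ) 0 / deriv φ 0 := by
  have hc2 : (0:ℝ) < c ^ 2 := by positivity
  set p := deriv φ with hpdef
  set q := deriv p with hqdef
  -- differentiability bookkeeping
  have hφd : Differentiable ℝ φ := hφ.differentiable (by norm_num)
  have hpC : ContDiff ℝ 2 p := by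
    have h3 : ContDiff ℝ ((2:ℕ) + 1) φ := by exact_mod_cast hφ
    exact (contDiff_succ_iff_deriv.mp h3).2.2
  have hpd : Differentiable ℝ p := hpC.differentiable (by norm_num)
  have hqC : ContDiff ℝ 1 q := by
    have h3 : ContDiff ℝ ((1:ℕ) + 1) p := by exact_mod_cast hpC
    exact (contDiff_succ_iff_deriv.mp h3).2.2
  have hqd : Differentiable ℝ q := hqC.differentiable (by norm_num)
  have hψd : Differentiable ℝ ψ := hψ.differentiable (by norm_num)
  have hψ'C : ContDiff ℝ 1 (deriv ψ) := by
    have h3 : ContDiff ℝ ((1:ℕ) + 1) ψ := by exact_mod_cast hψ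
    exact (contDiff_succ_iff_deriv.mp h3).2.2
  have hψ'd : Differentiable ℝ (deriv ψ) := hψ'C.differentiable (by norm_num)
  -- the equation
  have hqsin : ∀ x ≥ 0, c ^ 2 * q x = sin (φ x) := by
    intro x hx; have := heq x hx; linarith
  -- energy conservation
  set E := c ^ 2 * (p 0) ^ 2 / 2 + cos (φ 0) with hEdef
  have henergy : ∀ x ≥ 0, c ^ 2 * (p x) ^ 2 / 2 + cos (φ x) = E := by
    intro x hx
    have hder : ∀ t ∈ uIcc 0 x,
        HasDerivAt (fun y => c ^ 2 * (p y) ^ 2 / 2 + cos (φ y)) 0 t := by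
      intro t ht
      rw [uIcc_of_le hx] at ht
      have h1 : HasDerivAt p (q t) t := (hpd t).hasDerivAt
      have h2 : HasDerivAt φ (p t) t := (hφd t).hasDerivAt
      have h3 : HasDerivAt (fun y => c ^ 2 * (p y) ^ 2 / 2)
          (c ^ 2 * (2 * p t ^ 1 * q t) / 2) t :=
        ((h1.pow 2).const_mul (c ^ 2)).div_const 2
      have h4 : HasDerivAt (fun y => cos (φ y)) (-sin (φ t) * p t) t := h2.cos
      have h5 := h3.add h4
      have hval : c ^ 2 * (2 * p t ^ 1 * q t) / 2 + -sin (φ t) * p t = 0 := by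
        have := hqsin t ht.1
        linear_combination p t * this
      rw [hval] at h5
      exact h5
    have hint : IntervalIntegrable (fun _ : ℝ => (0:ℝ)) volume 0 x :=
      intervalIntegrable_const
    have h0 := intervalIntegral.integral_eq_sub_of_hasDerivAt hder hint
    simp only [intervalIntegral.integral_zero] at h0
    have h1 : c ^ 2 * (p x) ^ 2 / 2 + cos (φ x)
        = c ^ 2 * (p 0) ^ 2 / 2 + cos (φ 0) := by linarith [h0]
    rw [hEdef]; exact h1
  clear_value E
  clear hEdef
  have hcosE : ∀ x ≥ 0, cos (φ x) < E := by
    intro x hx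
    have h1 := henergy x hx
    have h2 : 0 < c ^ 2 * (p x) ^ 2 / 2 := by
      have := hφ' x hx
      positivity
    linarith
  have hEm1 : -1 < E := lt_of_le_of_lt (neg_one_le_cos (φ 0)) (hcosE 0 le_rfl)
  -- key bound:  1 - cos²(φ x) ≤ M (E - cos (φ x))
  have hM : ∃ M : ℝ, 0 ≤ M ∧ ∀ x ≥ 0, 1 - cos (φ x) ^ 2 ≤ M * (E - cos (φ x)) := by
    by_cases hE : 1 ≤ E
    · refine ⟨2, by norm_num, fun x hx => ?_⟩
      nlinarith [cos_le_one (φ x), neg_one_le_cos (φ x), hcosE x hx]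
    · push_neg at hE
      -- the hard case: show cos (φ x) stays uniformly away from E
      have hδ : ∃ δ > 0, ∀ x ≥ 0, cos (φ x) ≤ E - δ := by
        -- p has constant sign on [0,∞)
        have hIVT : ∀ a b : ℝ, 0 ≤ a → 0 ≤ b → p a < 0 → 0 < p b → False := by
          intro a b ha hb hpa hpb
          rcases le_total a b with hab | hab
          · obtain ⟨t, ht, hpt⟩ := intermediate_value_Icc hab
              (hpd.continuous.continuousOn) ⟨hpa.le, hpb.le⟩
            exact hφ' t (le_trans ha ht.1) hpt
          · obtain ⟨t, ht, hpt⟩ := intermediate_value_Icc' hab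
              (hpd.continuous.continuousOn) ⟨hpa.le, hpb.le⟩
            exact hφ' t (le_trans hb ht.1) hpt
        have hsign : (∀ x ≥ 0, 0 < p x) ∨ (∀ x ≥ 0, p x < 0) := by
          rcases lt_or_gt_of_ne (hφ' 0 le_rfl) with h0 | h0
          · right; intro x hx
            by_contra hcon; push_neg at hcon
            exact hIVT 0 x le_rfl hx h0 (lt_of_le_of_ne hcon (Ne.symm (hφ' x hx)))
          · left; intro x hx
            by_contra hcon; push_neg at hcon
            exact hIVT x 0 hx le_rfl (lt_of_le_of_ne hcon (hφ' x hx)) h0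
        -- φ has a limit L at +∞
        have hlim : ∃ L, Tendsto φ atTop (𝓝 L) := by
          rcases hsign with hpos | hneg
          · -- increasing case
            have hmon : StrictMonoOn φ (Ici 0) :=
              strictMonoOn_of_deriv_pos (convex_Ici 0) hφd.continuous.continuousOn
                (fun x hx => by
                  rw [interior_Ici] at hx
                  exact hpos x (le_of_lt hx))
            set k : ℤ := ⌈φ 0 / (2 * π)⌉ + 1 with hk
            set m : ℝ := (k : ℝ) * (2 * π) with hm
            have hcosm : cos m = 1 := Real.cos_int_mul_two_pi k
            have hφ0m : φ 0 < m := by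
              have h1 : φ 0 / (2 * π) ≤ (⌈φ 0 / (2 * π)⌉ : ℝ) := Int.le_ceil _
              have h2 : (0:ℝ) < 2 * π := by positivity
              rw [div_le_iff₀ h2] at h1
              rw [hm, hk]
              push_cast
              nlinarith [pi_pos]
            have hub : ∀ x ≥ 0, φ x < m := by
              intro x hx
              by_contra hcon; push_neg at hcon
              obtain ⟨t, ht, hφt⟩ := intermediate_value_Icc hx
                hφd.continuous.continuousOn ⟨hφ0m.le, hcon⟩
              have := hcosE t ht.1
              rw [hφt, hcosm] at this
              linarith
            set Φ : ℝ → ℝ := fun x => φ (max x 0) with hΦ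
            have hΦmono : Monotone Φ := by
              intro a b hab
              rcases eq_or_lt_of_le (max_le_max hab (le_refl (0:ℝ))) with hcase | hcase
              · simp only [hΦ, hcase]; exact le_of_eq rfl
              · exact (hmon (le_max_right a 0) (le_max_right b 0) hcase).le
            have hΦbdd : BddAbove (range Φ) := by
              refine ⟨m, ?_⟩
              rintro y ⟨x, rfl⟩
              exact (hub (max x 0) (le_max_right x 0)).le
            refine ⟨⨆ x, Φ x, ?_⟩
            refine Tendsto.congr' ?_ (tendsto_atTop_ciSup hΦmono hΦbdd)
            filter_upwards [eventually_ge_atTop (0:ℝ)] with x hx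
            simp only [hΦ, max_eq_left hx]
          · -- decreasing case
            have hmon : StrictAntiOn φ (Ici 0) :=
              strictAntiOn_of_deriv_neg (convex_Ici 0) hφd.continuous.continuousOn
                (fun x hx => by
                  rw [interior_Ici] at hx
                  exact hneg x (le_of_lt hx))
            set k : ℤ := ⌊φ 0 / (2 * π)⌋ - 1 with hk
            set m : ℝ := (k : ℝ) * (2 * π) with hm
            have hcosm : cos m = 1 := Real.cos_int_mul_two_pi k
            have hφ0m : m < φ 0 := by
              have h1 : (⌊φ 0 / (2 * π)⌋ : ℝ) ≤ φ 0 / (2 * π) := Int.floor_le _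
              have h2 : (0:ℝ) < 2 * π := by positivity
              rw [le_div_iff₀ h2] at h1
              rw [hm, hk]
              push_cast
              nlinarith [pi_pos]
            have hub : ∀ x ≥ 0, m < φ x := by
              intro x hx
              by_contra hcon; push_neg at hcon
              obtain ⟨t, ht, hφt⟩ := intermediate_value_Icc' hx
                hφd.continuous.continuousOn ⟨hcon, hφ0m.le⟩
              have := hcosE t ht.1
              rw [hφt, hcosm] at this
              linarith
            set Φ : ℝ → ℝ := fun x => φ (max x 0) with hΦ
            have hΦanti : Antitone Φ := by
              intro a b hab
              rcases eq_or_lt_of_le (max_le_max hab (le_refl (0:ℝ))) with hcase | hcase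
              · simp only [hΦ, hcase]; exact le_of_eq rfl
              · exact (hmon (le_max_right a 0) (le_max_right b 0) hcase).le
            have hΦbdd : BddBelow (range Φ) := by
              refine ⟨m, ?_⟩
              rintro y ⟨x, rfl⟩
              exact (hub (max x 0) (le_max_right x 0)).le
            refine ⟨⨅ x, Φ x, ?_⟩
            refine Tendsto.congr' ?_ (tendsto_atTop_ciInf hΦanti hΦbdd)
            filter_upwards [eventually_ge_atTop (0:ℝ)] with x hx
            simp only [hΦ, max_eq_left hx]
        obtain ⟨L, hL⟩ := hlim
        have hcL : Tendsto (fun x => cos (φ x)) atTop (𝓝 (cos L)) :=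
          (Real.continuous_cos.tendsto L).comp hL
        have hcLle : cos L ≤ E := by
          refine le_of_tendsto hcL ?_
          filter_upwards [eventually_ge_atTop (0:ℝ)] with x hx
          exact (hcosE x hx).le
        have hcLlt : cos L < E := by
          rcases lt_or_eq_of_le hcLle with hlt | heqE
          · exact hlt
          · exfalso
            have hp2 : Tendsto (fun x => (p x) ^ 2) atTop (𝓝 0) := by
              have h1 : Tendsto (fun x => 2 * (E - cos (φ x)) / c ^ 2) atTop
                  (𝓝 (2 * (E - cos L) / c ^ 2)) :=
                ((tendsto_const_nhds.sub hcL).const_mul 2).div_const (c ^ 2)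
              have h2 : 2 * (E - cos L) / c ^ 2 = 0 := by
                rw [← heqE]; ring
              rw [h2] at h1
              refine Tendsto.congr' ?_ h1
              filter_upwards [eventually_ge_atTop (0:ℝ)] with x hx
              have := henergy x hx
              field_simp
              linear_combination (-2:ℝ) * this
            have hp0 : Tendsto p atTop (𝓝 0) := by
              rw [tendsto_zero_iff_abs_tendsto_zero]
              have hsq : Tendsto (fun x => Real.sqrt ((p x) ^ 2)) atTop
                  (𝓝 (Real.sqrt 0)) := (Real.continuous_sqrt.tendsto 0).comp hp2
              rw [Real.sqrt_zero] at hsq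
              exact hsq.congr (fun x => Real.sqrt_sq_eq_abs _)
            have hsinL : sin L ≠ 0 := by
              intro hs
              have hpy := sin_sq_add_cos_sq L
              rw [hs] at hpy
              nlinarith [hpy, heqE, hEm1, hE]
            have hq : Tendsto q atTop (𝓝 (sin L / c ^ 2)) := by
              have h1 : Tendsto (fun x => sin (φ x) / c ^ 2) atTop
                  (𝓝 (sin L / c ^ 2)) :=
                ((Real.continuous_sin.tendsto L).comp hL).div_const (c ^ 2)
              refine Tendsto.congr' ?_ h1
              filter_upwards [eventually_ge_atTop (0:ℝ)] with x hx
              have := hqsin x hx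
              field_simp
              linear_combination (-1:ℝ) * this
            have hMVT : ∀ n : ℕ, ∃ t ∈ Ioo (n:ℝ) ((n:ℝ) + 1),
                q t = (p ((n:ℝ) + 1) - p (n:ℝ)) / ((n:ℝ) + 1 - (n:ℝ)) := by
              intro n
              exact exists_hasDerivAt_eq_slope p q (lt_add_one (n:ℝ))
                (hpd.continuous.continuousOn) (fun t _ => (hpd t).hasDerivAt)
            choose ξ hξ hξq using hMVT
            have hξtop : Tendsto ξ atTop atTop :=
              tendsto_atTop_mono (fun n => (hξ n).1.le) tendsto_natCast_atTop_atTop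
            have h1 : Tendsto (fun n => q (ξ n)) atTop (𝓝 (sin L / c ^ 2)) :=
              hq.comp hξtop
            have h2 : Tendsto (fun n : ℕ => p ((n:ℝ) + 1) - p (n:ℝ)) atTop (𝓝 0) := by
              have ha : Tendsto (fun n : ℕ => p ((n:ℝ) + 1)) atTop (𝓝 0) :=
                hp0.comp (tendsto_atTop_add_const_right atTop 1 tendsto_natCast_atTop_atTop)
              have hb : Tendsto (fun n : ℕ => p (n:ℝ)) atTop (𝓝 0) :=
                hp0.comp tendsto_natCast_atTop_atTop
              simpa using ha.sub hb
            have h3 : (fun n : ℕ => q (ξ n)) = fun n : ℕ => p ((n:ℝ) + 1) - p (n:ℝ) := by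
              funext n
              rw [hξq n]
              norm_num
            rw [h3] at h1
            have huniq := tendsto_nhds_unique h1 h2
            have : sin L = 0 := by
              field_simp at huniq
              simpa using huniq
            exact hsinL this
        -- extract a uniform gap
        have hε0 : 0 < (E - cos L) / 2 := by linarith
        have hev : ∀ᶠ x in atTop, cos (φ x) < E - (E - cos L) / 2 :=
          hcL.eventually_lt_const (by linarith)
        obtain ⟨T, hT⟩ := eventually_atTop.mp hev
        have hne : (Icc (0:ℝ) (max T 0)).Nonempty := ⟨0, le_refl 0, le_max_right T 0⟩
        obtain ⟨x₀, hx₀, hmax⟩ := isCompact_Icc.exists_isMaxOn hne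
          ((Real.continuous_cos.comp hφd.continuous).continuousOn)
        refine ⟨min ((E - cos L) / 2) (E - cos (φ x₀)), ?_, ?_⟩
        · exact lt_min hε0 (by linarith [hcosE x₀ hx₀.1])
        · intro x hx
          rcases le_or_gt x (max T 0) with hxT | hxT
          · have hmx := hmax ⟨hx, hxT⟩
            have hmx' : cos (φ x) ≤ cos (φ x₀) := hmx
            have hd2 : min ((E - cos L) / 2) (E - cos (φ x₀)) ≤ E - cos (φ x₀) :=
              min_le_right _ _
            linarith [hmx']
          · have hxT2 : T ≤ x := le_trans (le_max_left T 0) hxT.le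
            have := hT x hxT2
            have hd1 : min ((E - cos L) / 2) (E - cos (φ x₀)) ≤ (E - cos L) / 2 :=
              min_le_left _ _
            linarith
      obtain ⟨δ, hδ0, hδ⟩ := hδ
      refine ⟨1 / δ, by positivity, fun x hx => ?_⟩
      have h1 := hδ x hx
      have h2 : 1 - cos (φ x) ^ 2 ≤ 1 := by nlinarith [sq_nonneg (cos (φ x))]
      have h3 : (1:ℝ) ≤ (1 / δ) * (E - cos (φ x)) := by
        rw [div_mul_eq_mul_div, one_mul, le_div_iff₀ hδ0]
        linarith
      linarith
  obtain ⟨M, hM0, hMb⟩ := hM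
  -- bound |q/p| ≤ K on [0, ∞)
  have hK : ∃ K : ℝ, 0 ≤ K ∧ ∀ x ≥ 0, |q x / p x| ≤ K := by
    refine ⟨Real.sqrt (M / (2 * c ^ 2)), Real.sqrt_nonneg _, fun x hx => ?_⟩
    have hpx := hφ' x hx
    have hqx : q x = sin (φ x) / c ^ 2 := by
      have := hqsin x hx
      field_simp
      linear_combination this
    have hp2 : (p x) ^ 2 = 2 * (E - cos (φ x)) / c ^ 2 := by
      have := henergy x hx
      field_simp
      linear_combination 2 * this
    have h1 : (q x) ^ 2 = (1 - cos (φ x) ^ 2) / c ^ 4 := by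
      have hs : sin (φ x) ^ 2 = 1 - cos (φ x) ^ 2 := by
        linear_combination sin_sq_add_cos_sq (φ x)
      rw [hqx, div_pow, hs]
      ring_nf
    have hp2pos : 0 < (p x) ^ 2 := by positivity
    have key : (q x) ^ 2 * (2 * c ^ 2) ≤ M * (p x) ^ 2 := by
      rw [h1, hp2]
      have e1 : (1 - cos (φ x) ^ 2) / c ^ 4 * (2 * c ^ 2)
          = 2 * (1 - cos (φ x) ^ 2) / c ^ 2 := by
        field_simp
      have e2 : M * (2 * (E - cos (φ x)) / c ^ 2)
          = 2 * (M * (E - cos (φ x))) / c ^ 2 := by ring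
      rw [e1, e2]
      gcongr
      linarith [hMb x hx]
    have hsq : (q x / p x) ^ 2 ≤ M / (2 * c ^ 2) := by
      rw [div_pow, div_le_div_iff₀ hp2pos (by positivity : (0:ℝ) < 2 * c ^ 2)]
      exact key
    calc |q x / p x| = Real.sqrt ((q x / p x) ^ 2) := (Real.sqrt_sq_eq_abs _).symm
      _ ≤ Real.sqrt (M / (2 * c ^ 2)) := Real.sqrt_le_sqrt hsq
  obtain ⟨K, hK0, hKb⟩ := hK
  -- the boundary function F
  set F := fun x => c ^ 2 * (ψ x * deriv ψ x) - c ^ 2 * (ψ x ^ 2 * (q x / p x)) with hFdef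
  have hFtend : Tendsto F atTop (𝓝 0) := by
    have h1 : Tendsto (fun x => c ^ 2 * (ψ x * deriv ψ x)) atTop (𝓝 0) := by
      have := (hdecay1.mul hdecay2).const_mul (c ^ 2)
      simpa using this
    have h2 : Tendsto (fun x => c ^ 2 * (ψ x ^ 2 * (q x / p x))) atTop (𝓝 0) := by
      have hb : Tendsto (fun x => c ^ 2 * K * ψ x ^ 2) atTop (𝓝 0) := by
        have := ((hdecay1.mul hdecay1).const_mul (c ^ 2 * K))
        simpa [pow_two] using this
      apply squeeze_zero_norm' _ hb
      filter_upwards [eventually_ge_atTop (0:ℝ)] with x hx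
      have hK' := hKb x hx
      rw [Real.norm_eq_abs, abs_mul, abs_mul]
      have e1 : |ψ x ^ 2| = ψ x ^ 2 := abs_of_nonneg (sq_nonneg _)
      have e2 : |c ^ 2| = c ^ 2 := abs_of_nonneg hc2.le
      rw [e1, e2]
      have h3 : ψ x ^ 2 * |q x / p x| ≤ ψ x ^ 2 * K :=
        mul_le_mul_of_nonneg_left hK' (sq_nonneg _)
      nlinarith [sq_nonneg (ψ x)]
    have := h1.sub h2
    simpa using this
  -- pointwise derivative of F on (0, ∞)
  set f1 := fun x => (-c ^ 2 * deriv (deriv ψ) x + cos (φ x) * ψ x) * ψ x with hf1def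
  set f2 := fun x => c ^ 2 * (p x) ^ 2 * (deriv (fun y => ψ y / p y) x) ^ 2 with hf2def
  have hFderiv : ∀ x ∈ Ioi (0:ℝ), HasDerivAt F (f2 x - f1 x) x := by
    intro x hx
    have hx0 : (0:ℝ) ≤ x := le_of_lt hx
    have hpx : p x ≠ 0 := hφ' x hx0
    -- derivative of q at x
    have hqev : q =ᶠ[𝓝 x] fun y => sin (φ y) / c ^ 2 := by
      filter_upwards [Ioi_mem_nhds hx] with y hy
      have := hqsin y (le_of_lt hy)
      field_simp
      linear_combination this
    have hr : HasDerivAt q (cos (φ x) * p x / c ^ 2) x := by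
      have h1 : HasDerivAt (fun y => sin (φ y) / c ^ 2) (cos (φ x) * p x / c ^ 2) x :=
        ((hφd x).hasDerivAt.sin).div_const (c ^ 2)
      exact h1.congr_of_eventuallyEq hqev
    -- derivative of w = ψ / p at x
    have hwx : HasDerivAt (fun y => ψ y / p y)
        ((deriv ψ x * p x - ψ x * q x) / (p x) ^ 2) x :=
      (hψd x).hasDerivAt.div (hpd x).hasDerivAt hpx
    have hw' : deriv (fun y => ψ y / p y) x
        = (deriv ψ x * p x - ψ x * q x) / (p x) ^ 2 := hwx.deriv
    -- derivative of F
    have hA : HasDerivAt (fun y => c ^ 2 * (ψ y * deriv ψ y))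
        (c ^ 2 * (deriv ψ x * deriv ψ x + ψ x * deriv (deriv ψ) x)) x :=
      ((hψd x).hasDerivAt.mul (hψ'd x).hasDerivAt).const_mul (c ^ 2)
    have hqp : HasDerivAt (fun y => q y / p y)
        ((cos (φ x) * p x / c ^ 2 * p x - q x * q x) / (p x) ^ 2) x :=
      hr.div (hpd x).hasDerivAt hpx
    have hB : HasDerivAt (fun y => c ^ 2 * (ψ y ^ 2 * (q y / p y)))
        (c ^ 2 * ((2 * ψ x ^ 1 * deriv ψ x) * (q x / p x)
          + ψ x ^ 2 * ((cos (φ x) * p x / c ^ 2 * p x - q x * q x) / (p x) ^ 2))) x :=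
      (((hψd x).hasDerivAt.pow 2).mul hqp).const_mul (c ^ 2)
    have hF := hA.sub hB
    refine hF.congr_deriv (Eq.symm ?_)
    show f2 x - f1 x = _
    simp only [hf2def, hf1def]
    rw [hw']
    field_simp
    ring
  -- integrability of the derivative
  have hGint : IntegrableOn (fun x => f2 x - f1 x) (Ioi 0) := hint2.sub hint1
  -- continuity of F at 0 from the right
  have hFcont : ContinuousWithinAt F (Ici 0) 0 := by
    apply ContinuousAt.continuousWithinAt
    apply ContinuousAt.sub
    · exact continuousAt_const.mul
        ((hψd.continuous.continuousAt).mul (hψ'd.continuous.continuousAt))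
    · exact continuousAt_const.mul
        (((hψd.continuous.continuousAt).pow 2).mul
          ((hqd.continuous.continuousAt).div (hpd.continuous.continuousAt)
            (hφ' 0 le_rfl)))
  -- FTC
  have hFTC := integral_Ioi_of_hasDerivAt_of_tendsto hFcont hFderiv hGint hFtend
  have hsplit : ∫ x in Ioi 0, (f2 x - f1 x) = (∫ x in Ioi 0, f2 x) - ∫ x in Ioi 0, f1 x :=
    integral_sub hint2 hint1
  have hF0 : F 0 = -(c ^ 2 * (ψ 0) ^ 2 * q 0 / p 0) := by
    rw [hFdef]
    simp only [hψ0]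
    ring
  rw [hsplit, hF0] at hFTC
  show ∫ x in Ioi 0, f1 x = (∫ x in Ioi 0, f2 x) - c ^ 2 * (ψ 0) ^ 2 * q 0 / p 0
  linarith [hFTC]
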